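/- Define A_n = ∑_{i=0}^{n} (-1)^i * C(2n-1, i) / (n + i) for n ≥ 1. Then A_1 = 1/2 and for all n ≥ 1, A_{n+1} = (2n(2n+1) / (3(3n+1)(3n+2))) * A_n + (-1)^{n+1} * (28n^3 + 22n^2 - n - 1) / (6n(n+1)(3n+1)(3n+2)) * C(2n, n+1). -/

import Mathlib

noncomputable def Fc (n i : ℕ) : ℚ := (-1 : ℚ) ^ i * ((2 * n - 1).choose i) / (n + i)

noncomputable def Gc (n k : ℕ) : ℚ :=
  (-1 : ℚ) ^ k * k * (-(2*n+1)*k^2 + (8*(n:ℚ)^2+3*n+1)*k + 46*(n:ℚ)^3+34*n^2+7*n)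
    * ((2*n+1).choose k) / (6*n*(2*n+1)*(3*n+1)*(3*n+2)*(n+k))

lemma key (n i : ℕ) (hn : 1 ≤ n) (hi : i ≤ n) :
    (2*(n:ℚ)*(2*n+1) / (3*(3*n+1)*(3*n+2))) * Fc n i - Fc (n+1) i
      = Gc n (i+1) - Gc n i := by
  have hn1 : (1:ℚ) ≤ (n:ℚ) := by exact_mod_cast hn
  have e1 : ((2*n-1).choose i : ℚ) * ((2*n:ℚ)) * (2*n+1)
      = ((2*n+1).choose i : ℚ) * (2*(n:ℚ)+1-i) * (2*(n:ℚ)-i) := by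
    have h1 : (2*n-1).choose i * (2*n-1+1) = (2*n-1+1).choose i * (2*n-1+1-i) :=
      Nat.choose_mul_succ_eq (2*n-1) i
    have h2 : (2*n).choose i * (2*n+1) = (2*n+1).choose i * (2*n+1-i) :=
      Nat.choose_mul_succ_eq (2*n) i
    have hs : 2*n-1+1 = 2*n := by omega
    rw [hs] at h1
    have hi1 : i ≤ 2*n := by omega
    have hi2 : i ≤ 2*n+1 := by omega
    have c1 : ((2*n-1).choose i : ℚ) * (2*n) = ((2*n).choose i : ℚ) * (2*(n:ℚ)-i) := by
      have := congrArg (Nat.cast : ℕ → ℚ) h1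
      push_cast [Nat.cast_sub hi1] at this ⊢
      linarith [this]
    have c2 : ((2*n).choose i : ℚ) * (2*(n:ℚ)+1) = ((2*n+1).choose i : ℚ) * (2*(n:ℚ)+1-i) := by
      have := congrArg (Nat.cast : ℕ → ℚ) h2
      push_cast [Nat.cast_sub hi2] at this ⊢
      linarith [this]
    nlinarith [c1, c2]
  have e2 : ((2*n+1).choose (i+1) : ℚ) * ((i:ℚ)+1) = ((2*n+1).choose i : ℚ) * (2*(n:ℚ)+1-i) := by
    have h := Nat.choose_succ_right_eq (2*n+1) i
    have hi2 : i ≤ 2*n+1 := by omega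
    have := congrArg (Nat.cast : ℕ → ℚ) h
    push_cast [Nat.cast_sub hi2] at this ⊢
    linarith [this]
  have hF1 : (2*(n+1)-1) = 2*n+1 := by omega
  have hnpos : (0:ℚ) < (n:ℚ) := by linarith
  have hni : (0:ℚ) < (n:ℚ) + i := by positivity
  have hn1i : (0:ℚ) < (n:ℚ) + 1 + i := by positivity
  have hip : (0:ℚ) < (i:ℚ) + 1 := by positivity
  set c : ℚ := ((2*n+1).choose i : ℚ) with hc
  have hcm : ((2*n-1).choose i : ℚ) = c * (2*(n:ℚ)+1-i) * (2*(n:ℚ)-i) / (2*n*(2*n+1)) := by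
    field_simp
    linarith [e1]
  have hcp : ((2*n+1).choose (i+1) : ℚ) = c * (2*(n:ℚ)+1-i) / ((i:ℚ)+1) := by
    field_simp
    linarith [e2]
  simp only [Fc, Gc, hF1, hcm, hcp]
  push_cast
  field_simp
  ring

theorem A_recurrence
    (A : ℕ → ℚ)
    (hA : ∀ n : ℕ, 1 ≤ n →
      A n = ∑ i ∈ Finset.range (n + 1), (-1 : ℚ) ^ i * ((2 * n - 1).choose i) / (n + i)) :
    A 1 = 1 / 2 ∧
    ∀ n : ℕ, 1 ≤ n →
      A (n + 1) = (2 * n * (2 * n + 1) / (3 * (3 * n + 1) * (3 * n + 2))) * A n +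
        (-1 : ℚ) ^ (n + 1) * (28 * (n : ℚ) ^ 3 + 22 * n ^ 2 - n - 1) /
          (6 * n * (n + 1) * (3 * n + 1) * (3 * n + 2)) * ((2 * n).choose (n + 1)) := by
  constructor
  · rw [hA 1 le_rfl]
    norm_num [Finset.sum_range_succ]
  · intro n hn
    have hFA : ∀ m : ℕ, 1 ≤ m →
        A m = ∑ i ∈ Finset.range (m + 1), Fc m i := by
      intro m hm
      rw [hA m hm]
      rfl
    have hn1 : (1:ℚ) ≤ (n:ℚ) := by exact_mod_cast hn
    have hnpos : (0:ℚ) < (n:ℚ) := by linarith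
    rw [hFA (n+1) (by omega), hFA n hn, Finset.sum_range_succ]
    have htel : ∑ i ∈ Finset.range (n+1), (Gc n (i+1) - Gc n i)
        = Gc n (n+1) - Gc n 0 := Finset.sum_range_sub (Gc n) (n+1)
    have hsum : ∑ i ∈ Finset.range (n+1),
        ((2*(n:ℚ)*(2*n+1) / (3*(3*n+1)*(3*n+2))) * Fc n i - Fc (n+1) i)
        = Gc n (n+1) - Gc n 0 := by
      rw [← htel]
      apply Finset.sum_congr rfl
      intro i hi
      exact key n i hn (by simpa using Finset.mem_range_succ_iff.mp hi)
    rw [Finset.sum_sub_distrib, ← Finset.mul_sum] at hsum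
    have hG0 : Gc n 0 = 0 := by simp [Gc]
    have hsplit : ∑ i ∈ Finset.range (n+1), Fc (n+1) i
        = (2*(n:ℚ)*(2*n+1) / (3*(3*n+1)*(3*n+2))) * (∑ i ∈ Finset.range (n+1), Fc n i)
          - Gc n (n+1) := by
      rw [hG0] at hsum; linarith [hsum]
    rw [hsplit]
    -- remains: - Gc n (n+1) + Fc (n+1) (n+1) = r n
    have hch : ((2*n+1).choose (n+1) : ℚ) = ((2*n).choose (n+1) : ℚ) * (2*(n:ℚ)+1) / n := by
      have h := Nat.choose_mul_succ_eq (2*n) (n+1)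
      have hs : 2*n+1-(n+1) = n := by omega
      rw [hs] at h
      have := congrArg (Nat.cast : ℕ → ℚ) h
      push_cast at this
      field_simp
      linarith [this]
    have hF1 : (2*(n+1)-1) = 2*n+1 := by omega
    simp only [Fc, Gc, hF1, hch]
    push_cast
    field_simp
    ring
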